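/- The dynamic-programming recurrence for few clients is correct: T(i, k₁,…,k_n) is true if and only if there exists a set of schedules for days 1 through i such that client j's total completion time over those days is at most k_j for every j. -/
import Mathlib


def C {n : ℕ} (σ : Equiv.Perm (Fin n)) (p : Fin n → ℕ) (j : Fin n) : ℕ :=
  ∑ j' ∈ Finset.univ.filter (fun j' => σ j' ≤ σ j), p j'

def T (n : ℕ) (p : ℕ → Fin n → ℕ) : ℕ → (Fin n → ℤ) → Prop
  | 0, ks => ∀ j, ks j ≠ -1
  | i + 1, ks => ∃ σ : Equiv.Perm (Fin n),
      T n p i (fun j => max (-1) (ks j - (C σ (p (i + 1)) j : ℤ)))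

theorem stmt18_aux (n : ℕ) (p : ℕ → Fin n → ℕ) : ∀ (i : ℕ) (ks : Fin n → ℤ),
    (∀ j, -1 ≤ ks j) →
    (T n p i ks ↔ ∃ σ : ℕ → Equiv.Perm (Fin n),
      ∀ j, ∑ i' ∈ Finset.Icc 1 i, (C (σ i') (p i') j : ℤ) ≤ ks j) := by
  intro i
  induction i with
  | zero =>
    intro ks hks
    simp only [T]
    constructor
    · intro h
      refine ⟨fun _ => 1, fun j => ?_⟩
      rw [show Finset.Icc 1 0 = ∅ from rfl, Finset.sum_empty]
      have h1 := hks j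
      have h2 := h j
      omega
    · rintro ⟨σ, hσ⟩ j
      have := hσ j
      rw [show Finset.Icc 1 0 = ∅ from rfl, Finset.sum_empty] at this
      omega
  | succ i ih =>
    intro ks hks
    simp only [T]
    constructor
    · rintro ⟨τ, hT⟩
      obtain ⟨σ, hσ⟩ := (ih _ (fun j => le_max_left _ _)).1 hT
      refine ⟨Function.update σ (i+1) τ, fun j => ?_⟩
      rw [Finset.sum_Icc_succ_top (by omega)]
      have h1 : ∀ i' ∈ Finset.Icc 1 i,
          (C (Function.update σ (i+1) τ i') (p i') j : ℤ) = (C (σ i') (p i') j : ℤ) := by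
        intro i' hi'
        simp only [Finset.mem_Icc] at hi'
        rw [Function.update_of_ne (by omega)]
      rw [Finset.sum_congr rfl h1, Function.update_self]
      have hS := hσ j
      have hC : (0:ℤ) ≤ ∑ i' ∈ Finset.Icc 1 i, (C (σ i') (p i') j : ℤ) :=
        Finset.sum_nonneg (fun _ _ => Int.natCast_nonneg _)
      rcases le_max_iff.1 hS with h | h
      · omega
      · omega
    · rintro ⟨σ, hσ⟩
      refine ⟨σ (i+1), (ih _ (fun j => le_max_left _ _)).2 ⟨σ, fun j => ?_⟩⟩
      have := hσ j
      rw [Finset.sum_Icc_succ_top (by omega)] at this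
      exact le_max_iff.2 (Or.inr (by omega))

theorem stmt18 (n : ℕ) (p : ℕ → Fin n → ℕ) (i : ℕ) (ks : Fin n → ℤ)
    (hks : ∀ j, 0 ≤ ks j) :
    T n p i ks ↔ ∃ σ : ℕ → Equiv.Perm (Fin n),
      ∀ j, ∑ i' ∈ Finset.Icc 1 i, (C (σ i') (p i') j : ℤ) ≤ ks j :=
  stmt18_aux n p i ks (fun j => le_trans (by norm_num) (hks j))
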